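/- arXiv:1911.00587 — 2 statements merged into one kernel-verified Lean document; each statement's English description precedes it below -/
import Mathlib

section
/- Let B > 1 and 0 < d ≤ K be real numbers. Let b : ℕ → ℝ be a sequence with n · b n / Bⁿ → 1 as n → ∞, let z : ℕ → ℝ satisfy d · b n ≤ z n ≤ K · b n for all n ≥ 1, and let zp : ℕ → ℝ satisfy 0 ≤ zp n for all n and zp n = z n / 2 for all odd n. Then there exist a real c > 0 and N₀ ∈ ℕ such that for all N ≥ N₀, Σ_{n=1}^N zp n ≥ c · Σ_{n=1}^N z n. -/
open Filter Finset

/-- If `b n ~ Bⁿ/n` with `B > 1`, `d·b n ≤ z n ≤ K·b n`, and `zp n = z n / 2`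
for odd `n` (and `zp n ≥ 0` always), then eventually the partial sums of `zp`
are at least a fixed positive proportion of the partial sums of `z`. -/
theorem stmt_2 (B d K : ℝ) (hB : 1 < B) (hd : 0 < d) (hdK : d ≤ K)
    (b z zp : ℕ → ℝ)
    (hb : Tendsto (fun n : ℕ => (n : ℝ) * b n / B ^ n) atTop (nhds 1))
    (hz_lb : ∀ n, 1 ≤ n → d * b n ≤ z n)
    (hz_ub : ∀ n, 1 ≤ n → z n ≤ K * b n)
    (hzp_nonneg : ∀ n, 0 ≤ zp n)
    (hzp_odd : ∀ n, Odd n → zp n = z n / 2) :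
    ∃ c : ℝ, 0 < c ∧ ∃ N₀ : ℕ, ∀ N, N₀ ≤ N →
      c * ∑ n ∈ Finset.Icc 1 N, z n ≤ ∑ n ∈ Finset.Icc 1 N, zp n := by
  have hB0 : (0:ℝ) < B := by linarith
  have hBpow : ∀ n : ℕ, (0:ℝ) < B ^ n := fun n => pow_pos hB0 n
  have hK0 : (0:ℝ) < K := lt_of_lt_of_le hd hdK
  -- eventual two-sided bounds on b
  have h1 : ∀ᶠ n : ℕ in atTop, (1/2 : ℝ) ≤ (n : ℝ) * b n / B ^ n :=
    hb.eventually_const_le (by norm_num)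
  have h2 : ∀ᶠ n : ℕ in atTop, (n : ℝ) * b n / B ^ n ≤ 2 :=
    hb.eventually_le_const (by norm_num)
  obtain ⟨M0, hM0⟩ := Filter.eventually_atTop.mp (h1.and h2)
  set M : ℕ := max M0 1 with hMdef
  clear_value M
  have hM1 : 1 ≤ M := by rw [hMdef]; exact le_max_right _ _
  -- raw bounds
  have hb_lb : ∀ n, M ≤ n → B ^ n ≤ 2 * ((n : ℝ) * b n) := by
    intro n hn
    have h := (hM0 n (by omega)).1
    rw [le_div_iff₀ (hBpow n)] at h
    linarith
  have hb_ub : ∀ n, M ≤ n → (n : ℝ) * b n ≤ 2 * B ^ n := by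
    intro n hn
    have h := (hM0 n (by omega)).2
    rw [div_le_iff₀ (hBpow n)] at h
    linarith
  -- the constant
  set C : ℝ := 2 + 8 * K * B / d with hCdef
  clear_value C
  have hC2 : (2:ℝ) ≤ C := by
    have h : 0 ≤ 8 * K * B / d := by positivity
    rw [hCdef]
    linarith
  have hC0 : (0:ℝ) < C := by linarith
  -- key termwise bound
  have key : ∀ n, M + 1 ≤ n → z n ≤ C * (zp n + zp (n - 1)) := by
    intro n hn
    rcases Nat.even_or_odd n with he | ho
    · -- even case: n = m+1 with m odd
      obtain ⟨m, rfl⟩ : ∃ m, n = m + 1 := ⟨n - 1, by omega⟩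
      have hm : M ≤ m := by omega
      have hm1 : 1 ≤ m := le_trans hM1 hm
      have hmo : Odd m := by
        rcases Nat.even_or_odd m with h | h
        · exact absurd (by simpa using h.add_one) (by simpa using he)
        · exact h
      simp only [Nat.add_sub_cancel]
      have hmR : (1:ℝ) ≤ (m : ℝ) := by exact_mod_cast hm1
      have hP : (0:ℝ) < B ^ m := hBpow m
      have hx : B ^ m ≤ 2 * ((m : ℝ) * b m) := hb_lb m hm
      have hy : ((m+1 : ℕ) : ℝ) * b (m+1) ≤ 2 * B ^ (m+1) := hb_ub (m+1) (by omega)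
      have hbm_pos : 0 < b m := by nlinarith
      -- y ≤ 4 B x where x = b m, y = b (m+1)
      have hy4 : b (m+1) ≤ 4 * B * b m := by
        have hpow : B ^ (m+1) = B * B ^ m := by ring
        have hcast : ((m+1 : ℕ) : ℝ) = (m : ℝ) + 1 := by push_cast; ring
        rw [hcast, hpow] at hy
        nlinarith
      have hz1 : z (m+1) ≤ K * b (m+1) := hz_ub (m+1) (by omega)
      have hzpm : d * b m / 2 ≤ zp m := by
        rw [hzp_odd m hmo]
        have := hz_lb m hm1
        linarith
      have h8 : (8 * K * B / d) * (d * b m / 2) = 4 * K * B * b m := by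
        field_simp; ring
      have hstep : (8 * K * B / d) * (d * b m / 2) ≤ (8 * K * B / d) * zp m := by
        apply mul_le_mul_of_nonneg_left hzpm (by positivity)
      have hzp1 : 0 ≤ zp (m+1) := hzp_nonneg _
      have hz2 : z (m+1) ≤ 4*K*B*b m := le_trans hz1 (by nlinarith)
      have h9 : 4*K*B*b m ≤ (8*K*B/d) * zp m := by rw [← h8]; exact hstep
      have h10 : 0 ≤ (8*K*B/d) * zp (m+1) := mul_nonneg (by positivity) hzp1
      have h11 : 0 ≤ zp m := hzp_nonneg m
      rw [hCdef]
      nlinarith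
    · -- odd case
      have h := hzp_odd n ho
      have h1 := hzp_nonneg n
      have h2 := hzp_nonneg (n-1)
      nlinarith
  -- the constant initial sum
  set A : ℝ := ∑ n ∈ Finset.Icc 1 M, z n with hAdef
  clear_value A
  -- eventual bound A ≤ (d/4) * B^(N-1) / N
  set A' : ℝ := max A 1 with hA'def
  clear_value A'
  have hA'0 : (0:ℝ) < A' := by rw [hA'def]; exact lt_of_lt_of_le one_pos (le_max_right _ _)
  set ε : ℝ := d / (4 * B * A') with hεdef
  clear_value ε
  have hε0 : 0 < ε := by rw [hεdef]; positivity
  have htend := tendsto_pow_const_div_const_pow_of_one_lt 1 hB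
  obtain ⟨N₂, hN₂⟩ := Filter.eventually_atTop.mp (htend.eventually_le_const hε0)
  -- final N₀
  refine ⟨1 / (2 * C + 1), by positivity, max (M + 2) (max N₂ 1), ?_⟩
  intro N hN
  have hNM : M + 2 ≤ N := le_trans (le_max_left _ _) hN
  have hN1 : 1 ≤ N := by omega
  set S : ℝ := ∑ n ∈ Finset.Icc 1 N, zp n with hSdef
  clear_value S
  -- split the z-sum
  have hIcc : ∀ (a : ℕ) (f : ℕ → ℝ), ∑ n ∈ Finset.Icc 1 a, f n = ∑ n ∈ Finset.Ioc 0 a, f n := by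
    intro a f
    rw [← Finset.Icc_add_one_left_eq_Ioc, zero_add]
  have hsplit : ∑ n ∈ Finset.Icc 1 N, z n
      = A + ∑ n ∈ Finset.Ioc M N, z n := by
    rw [hIcc, hAdef, hIcc, ← Finset.sum_Ioc_consecutive z (Nat.zero_le M) (by omega : M ≤ N)]
  -- bound the tail
  have htail : ∑ n ∈ Finset.Ioc M N, z n ≤ C * (2 * S) := by
    have step1 : ∑ n ∈ Finset.Ioc M N, z n
        ≤ ∑ n ∈ Finset.Ioc M N, C * (zp n + zp (n-1)) := by
      apply Finset.sum_le_sum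
      intro i hi
      rw [Finset.mem_Ioc] at hi
      exact key i (by omega)
    have sub1 : ∑ n ∈ Finset.Ioc M N, zp n ≤ S := by
      rw [hSdef]
      apply Finset.sum_le_sum_of_subset_of_nonneg
      · intro x hx
        rw [Finset.mem_Ioc] at hx
        rw [Finset.mem_Icc]
        omega
      · intro i _ _; exact hzp_nonneg i
    have reindex : ∑ n ∈ Finset.Ioc M N, zp (n - 1)
        = ∑ n ∈ Finset.Icc M (N - 1), zp n := by
      rw [← Finset.Icc_add_one_left_eq_Ioc]
      have himg : Finset.Icc (M + 1) N = (Finset.Icc M (N - 1)).image (· + 1) := by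
        rw [Finset.image_add_right_Icc]
        congr 1
        omega
      rw [himg, Finset.sum_image (by intro a _ c _ h; simp only at h; omega)]
      simp
    have sub2 : ∑ n ∈ Finset.Icc M (N - 1), zp n ≤ S := by
      rw [hSdef]
      apply Finset.sum_le_sum_of_subset_of_nonneg
      · intro x hx
        rw [Finset.mem_Icc] at hx
        rw [Finset.mem_Icc]
        omega
      · intro i _ _; exact hzp_nonneg i
    calc ∑ n ∈ Finset.Ioc M N, z n
        ≤ ∑ n ∈ Finset.Ioc M N, C * (zp n + zp (n-1)) := step1
      _ = C * (∑ n ∈ Finset.Ioc M N, zp n + ∑ n ∈ Finset.Ioc M N, zp (n-1)) := by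
          rw [← Finset.sum_add_distrib, Finset.mul_sum]
      _ ≤ C * (2 * S) := by
          rw [reindex] at *
          have := add_le_add sub1 sub2
          nlinarith
  -- lower bound on S via the last odd term
  have hAS : A ≤ S := by
    -- the largest odd index ≤ N
    set m : ℕ := if Odd N then N else N - 1 with hmdef
    clear_value m
    have hmo : Odd m := by
      rcases Nat.even_or_odd N with h | h
      · have : ¬ Odd N := by simpa using h
        rw [hmdef, if_neg this]
        exact Nat.Even.sub_odd (by omega) h odd_one
      · rw [hmdef, if_pos h]; exact h
    have hmN : m ≤ N := by rw [hmdef]; split <;> omega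
    have hmN1 : N - 1 ≤ m := by rw [hmdef]; split <;> omega
    have hmM : M ≤ m := by omega
    have hm1 : 1 ≤ m := by omega
    have hmR : (1:ℝ) ≤ (m : ℝ) := by exact_mod_cast hm1
    have hNR : (0:ℝ) < (N : ℝ) := by exact_mod_cast (by omega : 0 < N)
    -- zp m ≥ d * B^m / (4 m)
    have hx : B ^ m ≤ 2 * ((m : ℝ) * b m) := hb_lb m hmM
    have hzpm : d * b m / 2 ≤ zp m := by
      rw [hzp_odd m hmo]
      have := hz_lb m hm1
      linarith
    have hzpm2 : d * B ^ m / (4 * (m : ℝ)) ≤ zp m := by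
      rw [div_le_iff₀ (by positivity)]
      have ha := mul_le_mul_of_nonneg_left hx hd.le
      have hb2 := mul_le_mul_of_nonneg_left hzpm (by positivity : (0:ℝ) ≤ 4*(m:ℝ))
      linarith
    -- B^(N-1)/N ≤ B^m/m
    have hpow : B ^ (N - 1) ≤ B ^ m := pow_le_pow_right₀ hB.le (by omega)
    have hdiv : B ^ (N-1) / (N : ℝ) ≤ B ^ m / (m : ℝ) := by
      apply div_le_div₀ (le_of_lt (hBpow m)) hpow (by linarith) ?_
      exact_mod_cast hmN
    -- A ≤ d/4 * B^(N-1)/N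
    have hNε := hN₂ N (le_trans (le_trans (le_max_left _ _) (le_max_right _ _)) hN)
    simp only [pow_one] at hNε
    rw [div_le_iff₀ (hBpow N)] at hNε
    have hBN : B ^ N = B * B ^ (N - 1) := by
      rw [← pow_succ']
      congr 1
      omega
    have hεe : A' * (ε * B) = d / 4 := by
      rw [hεdef]
      field_simp
    have hA_step : A ≤ d / 4 * (B ^ (N-1) / (N:ℝ)) := by
      rw [show d / 4 * (B ^ (N-1) / (N:ℝ)) = (d / 4 * B ^ (N-1)) / (N:ℝ) by ring,
        le_div_iff₀ hNR]
      have h1 : (N : ℝ) * A' ≤ ε * B ^ N * A' :=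
        mul_le_mul_of_nonneg_right hNε (le_of_lt hA'0)
      have h2 : A ≤ A' := by rw [hA'def]; exact le_max_left _ _
      have h3 : A * (N:ℝ) ≤ A' * (N:ℝ) := mul_le_mul_of_nonneg_right h2 hNR.le
      have hεe2 : A' * (ε * B) * B ^ (N-1) = d / 4 * B ^ (N-1) := by rw [hεe]
      rw [hBN] at h1
      linarith [h1, h3, hεe2]
    calc A ≤ d / 4 * (B ^ (N-1) / (N:ℝ)) := hA_step
      _ ≤ d / 4 * (B ^ m / (m : ℝ)) := by
          apply mul_le_mul_of_nonneg_left hdiv (by positivity)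
      _ = d * B ^ m / (4 * (m : ℝ)) := by ring
      _ ≤ zp m := hzpm2
      _ ≤ S := by
          rw [hSdef]
          apply Finset.single_le_sum (fun i _ => hzp_nonneg i)
          rw [Finset.mem_Icc]
          omega
  -- conclude
  have hZ : ∑ n ∈ Finset.Icc 1 N, z n ≤ (2 * C + 1) * S := by
    rw [hsplit]
    linarith [htail, hAS]
  have hc1 : (1 / (2 * C + 1)) * ((2 * C + 1) * S) = S := by
    rw [one_div, inv_mul_cancel_left₀ (by linarith : (2 * C + 1) ≠ 0)]
  calc (1 / (2 * C + 1)) * ∑ n ∈ Finset.Icc 1 N, z n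
      ≤ (1 / (2 * C + 1)) * ((2 * C + 1) * S) := by
        apply mul_le_mul_of_nonneg_left hZ (by positivity)
    _ = S := hc1
end

section
/- Let g ≥ 2 be an integer and set α = g + √(g² − 1). Let d, K, C > 0 be real numbers and k a natural number. Let z, zp, h2 : ℕ → ℝ and f0 : ℕ → ℝ be sequences with z n ≥ 0 for all n, and suppose: (i) there exists N₁ such that for all n ≥ N₁, d · αⁿ/n ≤ z n ≤ K · αⁿ/n; (ii) 0 ≤ zp n ≤ z n for all n, and zp n = z n / 2 for all odd n; (iii) 0 ≤ h2 n ≤ C · n^k · gⁿ for all n; (iv) 0 ≤ f0 N ≤ C · g^N for all N. Then (Σ_{n=1}^N z n − f0 N) − Σ_{n=1}^N (h2 n + z n − zp n) → ∞ as N → ∞. -/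
open Filter Finset

lemma aux_tendsto (c C : ℝ) (hc : 0 < c) (β : ℝ) (hβ : 1 < β) (k : ℕ) :
    Tendsto (fun N : ℕ => c * β ^ N / (N : ℝ) - 2 * C * (N : ℝ) ^ (k + 1))
      atTop atTop := by
  have h0 : Tendsto (fun N : ℕ => (N : ℝ) ^ (k + 2) / β ^ N) atTop (nhds 0) :=
    tendsto_pow_const_div_const_pow_of_one_lt (k + 2) hβ
  have hβ0 : (0 : ℝ) < β := lt_trans one_pos hβ
  have hpos : ∀ᶠ N : ℕ in atTop, (N : ℝ) ^ (k + 2) / β ^ N ∈ Set.Ioi (0 : ℝ) := by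
    filter_upwards [eventually_ge_atTop 1] with N hN
    have : (0 : ℝ) < (N : ℝ) := by exact_mod_cast hN
    exact div_pos (pow_pos this _) (pow_pos hβ0 _)
  have h1 : Tendsto (fun N : ℕ => ((N : ℝ) ^ (k + 2) / β ^ N)⁻¹) atTop atTop :=
    (tendsto_nhdsWithin_of_tendsto_nhds_of_eventually_within _ h0 hpos).inv_tendsto_nhdsGT_zero
  have h2 : Tendsto (fun N : ℕ => β ^ N / (N : ℝ) ^ (k + 2)) atTop atTop := by
    refine h1.congr fun N => ?_
    rw [inv_div]
  have h3 : Tendsto (fun N : ℕ => c * (β ^ N / (N : ℝ) ^ (k + 2)) + -(2 * C))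
      atTop atTop :=
    tendsto_atTop_add_const_right _ _ (h2.const_mul_atTop hc)
  have hN : Tendsto (fun N : ℕ => (N : ℝ) ^ (k + 1)) atTop atTop :=
    (tendsto_pow_atTop (Nat.succ_ne_zero k)).comp tendsto_natCast_atTop_atTop
  have h4 := hN.atTop_mul_atTop₀ h3
  refine h4.congr' ?_
  filter_upwards [eventually_ge_atTop 1] with N hN1
  have hN0 : ((N : ℝ)) ≠ 0 := by
    have : (0 : ℝ) < (N : ℝ) := by exact_mod_cast hN1
    exact ne_of_gt this
  field_simp
  ring

/-- Quantitative skeleton of Lemma 5.1, case (1) for a compact hyperbolic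
curve of genus `g`: `z n` grows like `αⁿ/n` with `α = g + √(g² − 1)`, the
fixed parts are half for odd `n`, and the `H²` and `F⁰` contributions are
`O(n^k gⁿ)` and `O(g^N)` respectively. -/
theorem stmt_13 (g : ℕ) (hg : 2 ≤ g) (α : ℝ)
    (hα : α = (g : ℝ) + Real.sqrt ((g : ℝ) ^ 2 - 1))
    (d K C : ℝ) (hd : 0 < d) (hK : 0 < K) (hC : 0 < C) (k : ℕ)
    (z zp h2 f0 : ℕ → ℝ)
    (hz_nonneg : ∀ n : ℕ, 0 ≤ z n)
    (hz_growth : ∃ N₁ : ℕ, ∀ n : ℕ, N₁ ≤ n →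
      d * α ^ n / (n : ℝ) ≤ z n ∧ z n ≤ K * α ^ n / (n : ℝ))
    (hzp_nonneg : ∀ n : ℕ, 0 ≤ zp n)
    (hzp_le : ∀ n : ℕ, zp n ≤ z n)
    (hzp_odd : ∀ n : ℕ, Odd n → zp n = z n / 2)
    (hh2_nonneg : ∀ n : ℕ, 0 ≤ h2 n)
    (hh2_ub : ∀ n : ℕ, h2 n ≤ C * (n : ℝ) ^ k * (g : ℝ) ^ n)
    (hf0_nonneg : ∀ N : ℕ, 0 ≤ f0 N)
    (hf0_ub : ∀ N : ℕ, f0 N ≤ C * (g : ℝ) ^ N) :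
    Tendsto
      (fun N : ℕ => ((∑ n ∈ Finset.Icc 1 N, z n) - f0 N)
        - ∑ n ∈ Finset.Icc 1 N, (h2 n + z n - zp n))
      atTop atTop := by
  obtain ⟨N₁, hN₁⟩ := hz_growth
  -- basic facts about g and α
  have hg1 : (1 : ℝ) ≤ (g : ℝ) := by exact_mod_cast Nat.one_le_of_lt hg
  have hg0 : (0 : ℝ) < (g : ℝ) := lt_of_lt_of_le one_pos hg1
  have hg2 : (2 : ℝ) ≤ (g : ℝ) := by exact_mod_cast hg
  have hsq : (0 : ℝ) < (g : ℝ) ^ 2 - 1 := by nlinarith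
  have hgα : (g : ℝ) < α := by
    rw [hα]
    have := Real.sqrt_pos.mpr hsq
    linarith
  have hα0 : (0 : ℝ) < α := lt_trans hg0 hgα
  have hα1 : (1 : ℝ) < α := lt_of_le_of_lt hg1 hgα
  set β : ℝ := α / (g : ℝ) with hβdef
  have hβ1 : 1 < β := (one_lt_div hg0).mpr hgα
  set c : ℝ := d / (2 * α) with hcdef
  have hc0 : 0 < c := div_pos hd (by linarith)
  -- the lower-bound sequence
  set L : ℕ → ℝ := fun N => c * β ^ N / (N : ℝ) - 2 * C * (N : ℝ) ^ (k + 1) with hL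
  have hLt : Tendsto L atTop atTop := aux_tendsto c C hc0 β hβ1 k
  refine tendsto_atTop_mono' atTop ?_ hLt
  filter_upwards [eventually_ge_atTop (max (N₁ + 1) 2), hLt.eventually_ge_atTop 0]
    with N hN hL0
  have hN2 : 2 ≤ N := le_trans (le_max_right _ _) hN
  have hNN₁ : N₁ + 1 ≤ N := le_trans (le_max_left _ _) hN
  have hN0 : (0 : ℝ) < (N : ℝ) := by
    have : 0 < N := lt_of_lt_of_le two_pos hN2
    exact_mod_cast this
  -- pick the largest odd index m ≤ N
  set m : ℕ := if Odd N then N else N - 1 with hmdef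
  have hmodd : Odd m := by
    by_cases h : Odd N
    · simpa [hmdef, h]
    · have hNe : Even N := Nat.not_odd_iff_even.mp h
      have : Odd (N - 1) := Nat.Even.sub_odd (le_trans one_le_two hN2) hNe odd_one
      simpa [hmdef, h]
  have hmleN : m ≤ N := by
    by_cases h : Odd N <;> simp [hmdef, h, Nat.sub_le]
  have hNlem : N ≤ m + 1 := by
    by_cases h : Odd N <;> simp [hmdef, h]
    omega
  have hm1 : 1 ≤ m := by
    by_cases h : Odd N <;> simp [hmdef, h] <;> omega
  have hmN₁ : N₁ ≤ m := by
    by_cases h : Odd N <;> simp [hmdef, h] <;> omega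
  have hm0 : (0 : ℝ) < (m : ℝ) := by exact_mod_cast lt_of_lt_of_le one_pos hm1
  have hmem : m ∈ Finset.Icc 1 N := Finset.mem_Icc.mpr ⟨hm1, hmleN⟩
  -- lower bound on the zp sum
  have hzp_sum : c * α ^ N / (N : ℝ) ≤ ∑ n ∈ Finset.Icc 1 N, zp n := by
    have step1 : c * α ^ N / (N : ℝ) ≤ d * α ^ m / (m : ℝ) / 2 := by
      have hαle : α ^ N ≤ α ^ m * α := by
        calc α ^ N ≤ α ^ (m + 1) := pow_le_pow_right₀ (le_of_lt hα1) hNlem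
          _ = α ^ m * α := pow_succ α m
      have heq : c * (α ^ m * α) = d * α ^ m / 2 := by
        rw [hcdef]; field_simp
      calc c * α ^ N / (N : ℝ) ≤ c * (α ^ m * α) / (N : ℝ) := by
            gcongr
        _ = d * α ^ m / 2 / (N : ℝ) := by rw [heq]
        _ ≤ d * α ^ m / 2 / (m : ℝ) := by
            gcongr
        _ = d * α ^ m / (m : ℝ) / 2 := by rw [div_right_comm]
    have step2 : d * α ^ m / (m : ℝ) / 2 ≤ zp m := by
      rw [hzp_odd m hmodd]
      have := (hN₁ m hmN₁).1
      linarith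
    have step3 : zp m ≤ ∑ n ∈ Finset.Icc 1 N, zp n :=
      Finset.single_le_sum (fun i _ => hzp_nonneg i) hmem
    linarith
  -- upper bound on the h2 sum
  have hh2_sum : ∑ n ∈ Finset.Icc 1 N, h2 n ≤ C * (N : ℝ) ^ (k + 1) * (g : ℝ) ^ N := by
    calc ∑ n ∈ Finset.Icc 1 N, h2 n
        ≤ ∑ n ∈ Finset.Icc 1 N, (C * (N : ℝ) ^ k * (g : ℝ) ^ N) := by
          refine Finset.sum_le_sum fun n hn => ?_
          obtain ⟨hn1, hnN⟩ := Finset.mem_Icc.mp hn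
          refine le_trans (hh2_ub n) ?_
          have hnN' : (n : ℝ) ≤ (N : ℝ) := by exact_mod_cast hnN
          gcongr <;> first | exact hg1 | exact hnN' | positivity
      _ = (N : ℝ) * (C * (N : ℝ) ^ k * (g : ℝ) ^ N) := by
          rw [Finset.sum_const, Nat.card_Icc]
          simp [nsmul_eq_mul]
      _ = C * (N : ℝ) ^ (k + 1) * (g : ℝ) ^ N := by ring
  -- rewrite the goal
  rw [Finset.sum_sub_distrib, Finset.sum_add_distrib]
  -- combine
  have hαβ : α ^ N = (g : ℝ) ^ N * β ^ N := by
    rw [hβdef, div_pow, mul_div_cancel₀]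
    positivity
  have hgN1 : (1 : ℝ) ≤ (g : ℝ) ^ N := one_le_pow₀ hg1
  have hNk1 : (1 : ℝ) ≤ (N : ℝ) ^ (k + 1) := one_le_pow₀ (by exact_mod_cast le_trans one_le_two hN2)
  have heq : c * α ^ N / (N : ℝ) - C * (N : ℝ) ^ (k + 1) * (g : ℝ) ^ N - C * (g : ℝ) ^ N
      = (g : ℝ) ^ N * (c * β ^ N / (N : ℝ) - C * (N : ℝ) ^ (k + 1) - C) := by
    rw [hαβ]; ring
  have hineq1 : (g : ℝ) ^ N * L N
      ≤ (g : ℝ) ^ N * (c * β ^ N / (N : ℝ) - C * (N : ℝ) ^ (k + 1) - C) := by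
    refine mul_le_mul_of_nonneg_left ?_ (by positivity)
    rw [hL]
    have : C ≤ C * (N : ℝ) ^ (k + 1) := le_mul_of_one_le_right (le_of_lt hC) hNk1
    linarith
  have hineq2 : L N ≤ (g : ℝ) ^ N * L N := le_mul_of_one_le_left hL0 hgN1
  have hf0 := hf0_ub N
  have key : (g : ℝ) ^ N * (c * β ^ N / (N : ℝ) - C * (N : ℝ) ^ (k + 1) - C)
      ≤ (∑ n ∈ Finset.Icc 1 N, zp n) - (∑ n ∈ Finset.Icc 1 N, h2 n) - f0 N := by
    rw [← heq]; linarith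
  calc L N ≤ (g : ℝ) ^ N * L N := hineq2
    _ ≤ (g : ℝ) ^ N * (c * β ^ N / (N : ℝ) - C * (N : ℝ) ^ (k + 1) - C) := hineq1
    _ ≤ (∑ n ∈ Finset.Icc 1 N, zp n) - (∑ n ∈ Finset.Icc 1 N, h2 n) - f0 N := key
    _ = (∑ n ∈ Finset.Icc 1 N, z n) - f0 N
        - ((∑ n ∈ Finset.Icc 1 N, h2 n) + (∑ n ∈ Finset.Icc 1 N, z n)
          - ∑ n ∈ Finset.Icc 1 N, zp n) := by ring
end
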